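/- Let γ = (γ_1, …, γ_n) ∈ ℕ^n, let c > 0 be a real number, and consider the integral over the polydisk {y ∈ ℂ^n : |y_1| < 1, …, |y_n| < 1} of the function |y_1|^{2γ_1} ⋯ |y_n|^{2γ_n} · |y|^{−2c} with respect to Lebesgue measure on ℂ^n ≅ ℝ^{2n}. This integral is finite if and only if γ_1 + ⋯ + γ_n > c − n, i.e. if and only if ∑_j γ_j ≥ ⌊c⌋ − n + 1 when c is not an integer. -/

import Mathlib

open MeasureTheory Real Metric
open scoped ENNReal NNReal Pointwise

/-- The integral over the unit polydisk in `ℂⁿ` of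
`|y₁|^(2γ₁) ⋯ |yₙ|^(2γₙ) · |y|^(-2c)` (Lebesgue measure, `|y|` the Euclidean
norm) is finite iff `γ₁ + ⋯ + γₙ > c - n`. -/
theorem polydisk_integrability_criterion {n : ℕ} (hn : 0 < n)
    (γ : Fin n → ℕ) (c : ℝ) (hc : 0 < c) :
    IntegrableOn
      (fun y : Fin n → ℂ =>
        (∏ i, ‖y i‖ ^ (2 * γ i)) *
          (Real.sqrt (∑ i, ‖y i‖ ^ 2)) ^ (-(2 * c)))
      {y : Fin n → ℂ | ∀ i, ‖y i‖ < 1} volume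
      ↔ (c - n < ∑ i, (γ i : ℝ)) := by
  haveI : Nonempty (Fin n) := ⟨⟨0, hn⟩⟩
  haveI : Nontrivial (Fin n → ℂ) := inferInstance
  classical
  set f : (Fin n → ℂ) → ℝ := fun y =>
    (∏ i, ‖y i‖ ^ (2 * γ i)) *
      (Real.sqrt (∑ i, ‖y i‖ ^ 2)) ^ (-(2 * c)) with hf_def
  set P : Set (Fin n → ℂ) := {y | ∀ i, ‖y i‖ < 1} with hP_def
  set Sn : ℕ := ∑ i, γ i with hSn_def
  have hsum_cast : (∑ i, (γ i : ℝ)) = (Sn : ℝ) := by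
    rw [hSn_def]; push_cast; rfl
  have hfrank : Module.finrank ℝ (Fin n → ℂ) = 2 * n := by
    simp [Module.finrank_pi_fintype, Complex.finrank_real_complex, mul_comm]
  have h2 : (0:ℝ) < 2⁻¹ := by norm_num
  -- the sqrt term
  set q : (Fin n → ℂ) → ℝ := fun y => Real.sqrt (∑ i, ‖y i‖ ^ 2) with hq_def
  have hq_nonneg : ∀ y, 0 ≤ q y := fun y => Real.sqrt_nonneg _
  have habs_le_q : ∀ (y : Fin n → ℂ) i, ‖y i‖ ≤ q y := by
    intro y i
    have h1 : ‖y i‖ ^ 2 ≤ ∑ j, ‖y j‖ ^ 2 :=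
      Finset.single_le_sum (f := fun j => ‖y j‖ ^ 2)
        (fun j _ => sq_nonneg _) (Finset.mem_univ i)
    calc ‖y i‖ = Real.sqrt (‖y i‖ ^ 2) :=
          (Real.sqrt_sq (norm_nonneg _)).symm
      _ ≤ q y := Real.sqrt_le_sqrt h1
  have hnorm_le_q : ∀ y : Fin n → ℂ, ‖y‖ ≤ q y := by
    intro y
    rw [pi_norm_le_iff_of_nonneg (hq_nonneg y)]
    intro i
    exact habs_le_q y i
  have hf_nonneg : ∀ y, 0 ≤ f y := fun y =>
    mul_nonneg (Finset.prod_nonneg fun i _ => pow_nonneg (norm_nonneg _) _)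
      (Real.rpow_nonneg (Real.sqrt_nonneg _) _)
  have hrpow_meas : Measurable (fun x : ℝ => x ^ (-(2 * c))) := by
    apply measurable_of_continuousOn_compl_singleton (0 : ℝ)
    intro x hx
    exact (Real.continuousAt_rpow_const x _ (Or.inl hx)).continuousWithinAt
  have hf_meas : Measurable f := by
    apply Measurable.mul
    · exact (Finset.measurable_prod Finset.univ fun i _ =>
        ((continuous_norm.comp (continuous_apply i)).pow _).measurable)
    · exact hrpow_meas.comp
        ((continuous_finset_sum Finset.univ fun i _ =>
          (continuous_norm.comp (continuous_apply i)).pow 2).sqrt.measurable)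
  -- reduce integrability to finiteness of the lintegral
  have hiff : IntegrableOn f P volume ↔ ∫⁻ y in P, ENNReal.ofReal (f y) < ⊤ := by
    constructor
    · intro h
      exact (hasFiniteIntegral_iff_ofReal
        (Filter.Eventually.of_forall hf_nonneg)).1 h.2
    · intro h
      exact ⟨hf_meas.aestronglyMeasurable, (hasFiniteIntegral_iff_ofReal
        (Filter.Eventually.of_forall hf_nonneg)).2 h⟩
  rw [hiff, hsum_cast]
  set r : ℕ → ℝ := fun k => (2⁻¹ : ℝ) ^ k with hr_def
  have hr_pos : ∀ k, 0 < r k := fun k => pow_pos h2 k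
  have hr_le_one : ∀ k, r k ≤ 1 := fun k => pow_le_one₀ h2.le (by norm_num)
  have hr_anti : ∀ {j k : ℕ}, j ≤ k → r k ≤ r j := fun {j k} h =>
    pow_le_pow_of_le_one h2.le (by norm_num) h
  have hr_succ : ∀ k, r (k + 1) = r k * 2⁻¹ := fun k => pow_succ _ _
  -- power identities
  have hrpow : ∀ (k : ℕ) (e : ℝ), (r k : ℝ) ^ e = (2⁻¹ : ℝ) ^ ((k : ℝ) * e) := by
    intro k e
    show ((2⁻¹:ℝ) ^ k) ^ e = (2⁻¹ : ℝ) ^ ((k : ℝ) * e)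
    rw [← Real.rpow_natCast (2⁻¹ : ℝ) k, ← Real.rpow_mul h2.le]
  have hrnpow : ∀ (k m : ℕ), (r k : ℝ) ^ m = (2⁻¹ : ℝ) ^ ((k : ℝ) * (m : ℝ)) := by
    intro k m
    rw [← Real.rpow_natCast (r k) m, hrpow]
  have h2c : (2:ℝ) ^ (2 * c) = (2⁻¹:ℝ) ^ (-(2 * c)) := by
    rw [Real.rpow_neg h2.le, ← Real.inv_rpow h2.le, inv_inv]
  set t : ℝ := 2 * Sn + 2 * n - 2 * c with ht_def
  set V : ℝ≥0∞ := volume (ball (0 : Fin n → ℂ) 1) with hV_def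
  have hV_lt : V < ⊤ := measure_ball_lt_top
  constructor
  · -- integrable → exponent inequality (contrapositive)
    intro hfin
    by_contra hlt
    push_neg at hlt
    have ht_nonpos : t ≤ 0 := by rw [ht_def]; push_cast; nlinarith [hn]
    -- the open test set
    set T : Set (Fin n → ℂ) :=
      {y | ∀ i, 2⁻¹ < ‖y i‖} ∩ {y | ‖y‖ < 1} with hT_def
    have hT_open : IsOpen T := by
      apply IsOpen.inter
      · rw [Set.setOf_forall]
        exact isOpen_iInter_of_finite fun i =>
          isOpen_lt continuous_const (continuous_norm.comp (continuous_apply i))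
      · exact isOpen_lt continuous_norm continuous_const
    have hT_ne : T.Nonempty := by
      refine ⟨fun _ => ((3/4 : ℝ) : ℂ), ?_, ?_⟩
      · intro i
        simp only [Set.mem_setOf_eq, Complex.norm_real, Real.norm_eq_abs]
        rw [abs_of_pos (by norm_num : (0:ℝ) < 3/4)]
        norm_num
      · simp only [Set.mem_setOf_eq]
        rw [pi_norm_lt_iff one_pos]
        intro i
        rw [Complex.norm_real, Real.norm_eq_abs, abs_of_pos (by norm_num : (0:ℝ) < 3/4)]
        norm_num
    have hv : 0 < volume T := hT_open.measure_pos volume hT_ne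
    set S : ℕ → Set (Fin n → ℂ) := fun k => r k • T with hS_def
    have hS_meas : ∀ k, MeasurableSet (S k) := by
      intro k
      simp only [hS_def]
      exact (hT_open.smul₀ (hr_pos k).ne').measurableSet
    have habs_mem : ∀ (k : ℕ) (y : Fin n → ℂ), y ∈ S k →
        (∀ i, r (k+1) < ‖y i‖ ∧ ‖y i‖ < r k) := by
      rintro k y ⟨z, hz, rfl⟩ i
      have heq : ‖(r k • z) i‖ = r k * ‖z i‖ := by
        show ‖r k • z i‖ = r k * ‖z i‖
        rw [norm_smul, Real.norm_eq_abs,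
          abs_of_pos (hr_pos k)]
      constructor
      · rw [heq, hr_succ]
        exact mul_lt_mul_of_pos_left (hz.1 i) (hr_pos k)
      · rw [heq]
        have h1 : ‖z i‖ < 1 := by
          exact lt_of_le_of_lt (norm_le_pi_norm z i) hz.2
        calc r k * ‖z i‖ < r k * 1 := mul_lt_mul_of_pos_left h1 (hr_pos k)
          _ = r k := mul_one _
    have hnorm_mem : ∀ (k : ℕ) (y : Fin n → ℂ), y ∈ S k →
        r (k+1) < ‖y‖ ∧ ‖y‖ < r k := by
      intro k y hy
      constructor
      · calc r (k+1) < ‖y ⟨0, hn⟩‖ := (habs_mem k y hy ⟨0, hn⟩).1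
          _ = ‖y ⟨0, hn⟩‖ := rfl
          _ ≤ ‖y‖ := norm_le_pi_norm y _
      · rw [pi_norm_lt_iff (hr_pos k)]
        intro i
        exact (habs_mem k y hy i).2
    have hS_subP : ∀ k, S k ⊆ P := by
      intro k y hy i
      exact lt_of_lt_of_le (habs_mem k y hy i).2 (hr_le_one k)
    have hdisj_lt : ∀ {j k : ℕ}, j < k → Disjoint (S j) (S k) := by
      intro j k hjk
      rw [Set.disjoint_left]
      intro y hyj hyk
      have h1 := (hnorm_mem j y hyj).1
      have h2' := (hnorm_mem k y hyk).2
      have : r k ≤ r (j+1) := hr_anti hjk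
      linarith
    have hS_disj : Pairwise (Function.onFun Disjoint S) := by
      intro j k hne
      rcases hne.lt_or_gt with h | h
      · exact hdisj_lt h
      · exact (hdisj_lt h).symm
    -- pointwise lower bound on S k
    set m : ℕ → ℝ := fun k =>
      r (k+1) ^ (2 * Sn) * (Real.sqrt n * r k) ^ (-(2 * c)) with hm_def
    have hlb : ∀ (k : ℕ) (y : Fin n → ℂ), y ∈ S k → m k ≤ f y := by
      intro k y hy
      have hq_up : q y ≤ Real.sqrt n * r k := by
        have hsum : (∑ i, ‖y i‖ ^ 2) ≤ (n : ℝ) * (r k) ^ 2 := by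
          calc (∑ i, ‖y i‖ ^ 2) ≤ ∑ _i : Fin n, (r k) ^ 2 :=
                Finset.sum_le_sum fun i _ =>
                  pow_le_pow_left₀ (norm_nonneg _) (habs_mem k y hy i).2.le 2
            _ = (n : ℝ) * (r k) ^ 2 := by
                simp [Finset.sum_const, Finset.card_univ, nsmul_eq_mul]
        calc q y ≤ Real.sqrt ((n : ℝ) * (r k) ^ 2) := Real.sqrt_le_sqrt hsum
          _ = Real.sqrt n * r k := by
              rw [Real.sqrt_mul (Nat.cast_nonneg n), Real.sqrt_sq (hr_pos k).le]
      have hq_pos : 0 < q y :=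
        lt_of_lt_of_le (lt_trans (hr_pos (k+1)) (habs_mem k y hy ⟨0, hn⟩).1)
          (habs_le_q y ⟨0, hn⟩)
      have h1 : r (k+1) ^ (2 * Sn) ≤ ∏ i, ‖y i‖ ^ (2 * γ i) := by
        have : (∏ i, r (k+1) ^ (2 * γ i)) ≤ ∏ i, ‖y i‖ ^ (2 * γ i) :=
          Finset.prod_le_prod (fun i _ => pow_nonneg (hr_pos (k+1)).le _)
            (fun i _ => pow_le_pow_left₀ (hr_pos (k+1)).le (habs_mem k y hy i).1.le _)
        calc r (k+1) ^ (2 * Sn) = ∏ i, r (k+1) ^ (2 * γ i) := by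
              rw [Finset.prod_pow_eq_pow_sum]
              congr 1
              rw [hSn_def, Finset.mul_sum]
          _ ≤ _ := this
      have h2' : (Real.sqrt n * r k) ^ (-(2 * c)) ≤ q y ^ (-(2 * c)) :=
        Real.rpow_le_rpow_of_nonpos hq_pos hq_up (by linarith)
      exact mul_le_mul h1 h2' (Real.rpow_nonneg
        (mul_nonneg (Real.sqrt_nonneg _) (hr_pos k).le) _)
        (Finset.prod_nonneg fun i _ => pow_nonneg (norm_nonneg _) _)
    -- the uniform lower bound constant
    set κ : ℝ := Real.sqrt n ^ (-(2 * c)) * (2⁻¹:ℝ) ^ (2 * Sn) with hκ_def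
    have hκ_pos : 0 < κ :=
      mul_pos (Real.rpow_pos_of_pos (Real.sqrt_pos.2 (Nat.cast_pos.2 hn)) _)
        (pow_pos h2 _)
    have hkey2 : ∀ k : ℕ, κ ≤ m k * r k ^ (2 * n) := by
      intro k
      have gen : ∀ (s a b d e g : ℝ), a + b + d = e + g →
          (2⁻¹:ℝ)^a * (s * (2⁻¹:ℝ)^b) * (2⁻¹:ℝ)^d = s * (2⁻¹:ℝ)^e * (2⁻¹:ℝ)^g := by
        intro s a b d e g h
        calc (2⁻¹:ℝ)^a * (s * (2⁻¹:ℝ)^b) * (2⁻¹:ℝ)^d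
            = s * ((2⁻¹:ℝ)^a * (2⁻¹:ℝ)^b * (2⁻¹:ℝ)^d) := by ring
          _ = s * (2⁻¹:ℝ)^(a+b+d) := by rw [← Real.rpow_add h2, ← Real.rpow_add h2]
          _ = s * (2⁻¹:ℝ)^(e+g) := by rw [h]
          _ = s * (2⁻¹:ℝ)^e * (2⁻¹:ℝ)^g := by rw [Real.rpow_add h2, mul_assoc]
      have heq : m k * r k ^ (2 * n) = κ * (2⁻¹:ℝ) ^ ((k : ℝ) * t) := by
        simp only [hm_def]
        rw [Real.mul_rpow (Real.sqrt_nonneg _) (hr_pos k).le]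
        rw [hrnpow (k+1) (2 * Sn), hrpow k (-(2 * c)), hrnpow k (2 * n), hκ_def,
          ← Real.rpow_natCast (2⁻¹:ℝ) (2 * Sn)]
        apply gen
        rw [ht_def]
        push_cast
        ring
      rw [heq]
      have hu : 1 ≤ (2⁻¹:ℝ) ^ ((k : ℝ) * t) :=
        Real.one_le_rpow_of_pos_of_le_one_of_nonpos h2 (by norm_num)
          (mul_nonpos_of_nonneg_of_nonpos (Nat.cast_nonneg k) ht_nonpos)
      exact le_mul_of_one_le_right hκ_pos.le hu
    have hvolS : ∀ k, volume (S k) = ENNReal.ofReal (r k ^ (2 * n)) * volume T := by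
      intro k
      simp only [hS_def]
      rw [Measure.addHaar_smul_of_nonneg volume (hr_pos k).le T, hfrank]
    have hterm2 : ∀ k : ℕ,
        ENNReal.ofReal κ * volume T ≤ ∫⁻ y in S k, ENNReal.ofReal (f y) := by
      intro k
      calc ENNReal.ofReal κ * volume T
          ≤ ENNReal.ofReal (m k * r k ^ (2 * n)) * volume T := by
            exact mul_le_mul_left (ENNReal.ofReal_le_ofReal (hkey2 k)) _
        _ = ENNReal.ofReal (m k) * volume (S k) := by
            rw [hvolS k, ENNReal.ofReal_mul']
            · ring
            · exact pow_nonneg (hr_pos k).le _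
        _ = ∫⁻ _ in S k, ENNReal.ofReal (m k) := (setLIntegral_const _ _).symm
        _ ≤ ∫⁻ y in S k, ENNReal.ofReal (f y) :=
            setLIntegral_mono' (hS_meas k)
              (fun y hy => ENNReal.ofReal_le_ofReal (hlb k y hy))
    have htop : (⊤ : ℝ≥0∞) ≤ ∫⁻ y in P, ENNReal.ofReal (f y) := by
      calc (⊤ : ℝ≥0∞) = ∑' _ : ℕ, (ENNReal.ofReal κ * volume T) := by
            rw [ENNReal.tsum_const_eq_top_of_ne_zero]
            exact mul_ne_zero (ENNReal.ofReal_pos.2 hκ_pos).ne' hv.ne'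
        _ ≤ ∑' k : ℕ, ∫⁻ y in S k, ENNReal.ofReal (f y) := ENNReal.tsum_le_tsum hterm2
        _ = ∫⁻ y in ⋃ k, S k, ENNReal.ofReal (f y) :=
            (lintegral_iUnion hS_meas hS_disj _).symm
        _ ≤ ∫⁻ y in P, ENNReal.ofReal (f y) :=
            lintegral_mono_set (Set.iUnion_subset hS_subP)
    exact absurd hfin (by simp [top_le_iff.1 htop])
  · -- exponent inequality → finite lintegral
    intro hgt
    have ht_pos : 0 < t := by rw [ht_def]; push_cast; linarith
    set A : ℕ → Set (Fin n → ℂ) :=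
      fun k => {y | r (k+1) ≤ ‖y‖ ∧ ‖y‖ < r k} with hA_def
    have hA_meas : ∀ k, MeasurableSet (A k) := by
      intro k
      exact ((isClosed_le continuous_const continuous_norm).measurableSet).inter
        ((isOpen_lt continuous_norm continuous_const).measurableSet)
    have hcover : P \ {0} ⊆ ⋃ k, A k := by
      intro y hy
      have hy_lt : ‖y‖ < 1 := by
        have := hy.1
        rw [hP_def, Set.mem_setOf_eq] at this
        rw [pi_norm_lt_iff one_pos]
        intro i
        exact this i
      have hy_pos : 0 < ‖y‖ := norm_pos_iff.2 (by simpa using hy.2)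
      have hex : ∃ m : ℕ, r m ≤ ‖y‖ := by
        obtain ⟨m, hm⟩ := exists_pow_lt_of_lt_one hy_pos (by norm_num : (2⁻¹:ℝ) < 1)
        exact ⟨m, hm.le⟩
      have h0 : ¬ (r 0 ≤ ‖y‖) := by
        simp only [hr_def, pow_zero]
        linarith
      have hkspec := Nat.find_spec hex
      have hkne : Nat.find hex ≠ 0 := fun h => h0 (h ▸ hkspec)
      obtain ⟨j, hj⟩ := Nat.exists_eq_succ_of_ne_zero hkne
      refine Set.mem_iUnion.2 ⟨j, ?_, ?_⟩
      · rw [hj] at hkspec; exact hkspec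
      · by_contra hcon
        push_neg at hcon
        exact Nat.find_min hex (by omega : j < Nat.find hex) hcon
    have hAbound : ∀ (k : ℕ) (y : Fin n → ℂ), y ∈ A k →
        f y ≤ r k ^ (2 * Sn) * r (k+1) ^ (-(2 * c)) := by
      rintro k y ⟨hy1, hy2⟩
      have h1 : (∏ i, ‖y i‖ ^ (2 * γ i)) ≤ r k ^ (2 * Sn) := by
        calc (∏ i, ‖y i‖ ^ (2 * γ i)) ≤ ∏ i, r k ^ (2 * γ i) :=
              Finset.prod_le_prod (fun i _ => pow_nonneg (norm_nonneg _) _)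
                (fun i _ => by
                  apply pow_le_pow_left₀ (norm_nonneg _)
                  calc ‖y i‖ = ‖y i‖ := rfl
                    _ ≤ ‖y‖ := norm_le_pi_norm y i
                    _ ≤ r k := hy2.le)
          _ = r k ^ (2 * Sn) := by
              rw [Finset.prod_pow_eq_pow_sum]
              congr 1
              rw [hSn_def, Finset.mul_sum]
      have h2' : q y ^ (-(2 * c)) ≤ r (k+1) ^ (-(2 * c)) :=
        Real.rpow_le_rpow_of_nonpos (hr_pos (k+1))
          (hy1.trans (hnorm_le_q y)) (by linarith)
      exact mul_le_mul h1 h2' (Real.rpow_nonneg (hq_nonneg y) _)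
        (pow_nonneg (hr_pos k).le _)
    have hkey : ∀ k : ℕ,
        (r k ^ (2 * Sn) * r (k+1) ^ (-(2 * c))) * r k ^ (2 * n)
          = (2:ℝ) ^ (2 * c) * ((2⁻¹:ℝ) ^ t) ^ k := by
      intro k
      rw [hrnpow k (2 * Sn), hrpow (k+1) (-(2 * c)), hrnpow k (2 * n), h2c,
        ← Real.rpow_natCast ((2⁻¹:ℝ) ^ t) k, ← Real.rpow_mul h2.le,
        ← Real.rpow_add h2, ← Real.rpow_add h2, ← Real.rpow_add h2]
      congr 1
      rw [ht_def]
      push_cast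
      ring
    have hρ_lt : ENNReal.ofReal ((2⁻¹:ℝ) ^ t) < 1 := by
      rw [← ENNReal.ofReal_one]
      exact ENNReal.ofReal_lt_ofReal_iff_of_nonneg (Real.rpow_nonneg h2.le _) |>.2
        (Real.rpow_lt_one h2.le (by norm_num) ht_pos)
    have hterm : ∀ k : ℕ,
        ∫⁻ y in A k, ENNReal.ofReal (f y)
          ≤ (ENNReal.ofReal ((2:ℝ) ^ (2 * c)) * V) * ENNReal.ofReal ((2⁻¹:ℝ) ^ t) ^ k := by
      intro k
      calc ∫⁻ y in A k, ENNReal.ofReal (f y)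
          ≤ ∫⁻ _ in A k, ENNReal.ofReal (r k ^ (2 * Sn) * r (k+1) ^ (-(2 * c))) :=
            setLIntegral_mono' (hA_meas k)
              (fun y hy => ENNReal.ofReal_le_ofReal (hAbound k y hy))
        _ = ENNReal.ofReal (r k ^ (2 * Sn) * r (k+1) ^ (-(2 * c))) * volume (A k) :=
            setLIntegral_const _ _
        _ ≤ ENNReal.ofReal (r k ^ (2 * Sn) * r (k+1) ^ (-(2 * c)))
              * (ENNReal.ofReal (r k ^ (2 * n)) * V) := by
            gcongr
            have hsub : A k ⊆ ball (0 : Fin n → ℂ) (r k) :=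
              fun y hy => mem_ball_zero_iff.2 hy.2
            calc volume (A k) ≤ volume (ball (0 : Fin n → ℂ) (r k)) := measure_mono hsub
              _ = ENNReal.ofReal (r k ^ (2 * n)) * V := by
                  rw [Measure.addHaar_ball volume 0 (hr_pos k).le, hfrank]
        _ = ENNReal.ofReal ((r k ^ (2 * Sn) * r (k+1) ^ (-(2 * c))) * r k ^ (2 * n)) * V := by
            rw [ENNReal.ofReal_mul (mul_nonneg (pow_nonneg (hr_pos k).le _)
              (Real.rpow_nonneg (hr_pos (k+1)).le _))]
            ring
        _ = (ENNReal.ofReal ((2:ℝ) ^ (2 * c)) * V) * ENNReal.ofReal ((2⁻¹:ℝ) ^ t) ^ k := by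
            rw [hkey k, ENNReal.ofReal_mul (Real.rpow_nonneg (by norm_num) _),
              ENNReal.ofReal_pow (Real.rpow_nonneg h2.le _)]
            ring
    have hPae : ∫⁻ y in P, ENNReal.ofReal (f y)
        = ∫⁻ y in P \ {(0 : Fin n → ℂ)}, ENNReal.ofReal (f y) := by
      refine (setLIntegral_congr ?_).symm
      exact diff_ae_eq_self.2
        (measure_mono_null Set.inter_subset_right (measure_singleton _))
    calc ∫⁻ y in P, ENNReal.ofReal (f y)
        = ∫⁻ y in P \ {(0 : Fin n → ℂ)}, ENNReal.ofReal (f y) := hPae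
      _ ≤ ∫⁻ y in ⋃ k, A k, ENNReal.ofReal (f y) := lintegral_mono_set hcover
      _ ≤ ∑' k, ∫⁻ y in A k, ENNReal.ofReal (f y) := lintegral_iUnion_le _ _
      _ ≤ ∑' k : ℕ, (ENNReal.ofReal ((2:ℝ) ^ (2 * c)) * V) * ENNReal.ofReal ((2⁻¹:ℝ) ^ t) ^ k :=
          ENNReal.tsum_le_tsum hterm
      _ = (ENNReal.ofReal ((2:ℝ) ^ (2 * c)) * V) * ∑' k : ℕ, ENNReal.ofReal ((2⁻¹:ℝ) ^ t) ^ k :=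
          ENNReal.tsum_mul_left
      _ < ⊤ := by
          apply ENNReal.mul_lt_top
          · exact ENNReal.mul_lt_top ENNReal.ofReal_lt_top hV_lt
          · rw [ENNReal.tsum_geometric]
            exact ENNReal.inv_lt_top.2 (tsub_pos_of_lt hρ_lt)
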